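/- arXiv:1607.06115 — 2 statements merged into one kernel-verified Lean document; each statement's English description precedes it below -/
import Mathlib

section
/- Let g be a finite-dimensional semisimple complex Lie algebra, V(λ_1),...,V(λ_d) finite-dimensional irreducible g-modules with highest weights λ_1,...,λ_d, and p_1,...,p_d distinct complex numbers. Then the evaluation module V(λ_1)⊗...⊗V(λ_d) is an irreducible g[t]-module. -/
open scoped TensorProduct

attribute [local instance 100] LieRing.ofAssociativeRing

noncomputable instance currentLieAlgebra
    (g : Type*) [LieRing g] [LieAlgebra ℂ g] :
    LieAlgebra ℂ (Polynomial ℂ ⊗[ℂ] g) where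
  lie_smul t x y := by
    have h1 : t • y = (algebraMap ℂ (Polynomial ℂ) t) • y := (algebraMap_smul _ t y).symm
    have h2 : t • ⁅x, y⁆ = (algebraMap ℂ (Polynomial ℂ) t) • ⁅x, y⁆ :=
      (algebraMap_smul _ t _).symm
    rw [h1, h2]
    exact LieAlgebra.lie_smul (R := Polynomial ℂ) (L := Polynomial ℂ ⊗[ℂ] g) _ _ _


lemma burnside {V : Type*} [AddCommGroup V] [Module ℂ V] [FiniteDimensional ℂ V] [Nontrivial V]
    (B : Subalgebra ℂ (Module.End ℂ V))
    (hirr : ∀ W : Submodule ℂ V, (∀ f ∈ B, ∀ w ∈ W, f w ∈ W) → W = ⊥ ∨ W = ⊤)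
    (f : Module.End ℂ V) : f ∈ B := by
  classical
  -- Schur: any endomorphism commuting with all of B is a scalar
  have schur : ∀ u : Module.End ℂ V, (∀ b : B, u * (b : Module.End ℂ V) = b * u) →
      ∃ c : ℂ, u = c • 1 := by
    intro u hu
    obtain ⟨c, hc⟩ := Module.End.exists_eigenvalue u
    refine ⟨c, ?_⟩
    have hWinv : ∀ b ∈ B, ∀ w ∈ u.eigenspace c, b w ∈ u.eigenspace c := by
      intro b hb w hw
      rw [Module.End.mem_eigenspace_iff] at hw ⊢
      have := congrArg (fun (z : Module.End ℂ V) => z w) (hu ⟨b, hb⟩)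
      simp only [Module.End.mul_apply] at this
      rw [this, hw, map_smul]
    rcases hirr _ hWinv with hbot | htop
    · exact absurd hbot hc
    · ext x
      have hx : x ∈ u.eigenspace c := htop ▸ Submodule.mem_top
      rw [Module.End.mem_eigenspace_iff] at hx
      simpa using hx
  -- density argument
  set n := Module.finrank ℂ V with hn
  set v : Module.Basis (Fin n) ℂ V := Module.finBasis ℂ V with hv
  -- V is a simple B-module
  have coe_smul : ∀ (b : B) (x : V), b • x = (b : Module.End ℂ V) x := fun _ _ => rfl
  have algsmul : ∀ (c : ℂ) (x : V), (algebraMap ℂ B c) • x = c • x := by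
    intro c x
    rw [coe_smul]
    have : ((algebraMap ℂ B c : B) : Module.End ℂ V) = algebraMap ℂ (Module.End ℂ V) c := rfl
    rw [this, Module.algebraMap_end_apply]
  haveI : Nontrivial (Submodule B V) := by
    refine ⟨⊥, ⊤, fun h => ?_⟩
    obtain ⟨x, hx⟩ := exists_ne (0 : V)
    have hxmem : x ∈ (⊥ : Submodule B V) := by rw [h]; trivial
    exact hx (by simpa using hxmem)
  haveI : IsSimpleModule B V := by
    refine (isSimpleModule_iff B V).mpr ⟨fun W => ?_⟩
    set W' : Submodule ℂ V :=
      { carrier := W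
        add_mem' := fun ha hb => W.add_mem ha hb
        zero_mem' := W.zero_mem
        smul_mem' := fun c x hx => by
          have := W.smul_mem (algebraMap ℂ B c) hx
          rwa [algsmul] at this } with hW'
    have hmem : ∀ x, x ∈ W' ↔ x ∈ W := fun x => Iff.rfl
    have hinv : ∀ f ∈ B, ∀ w ∈ W', f w ∈ W' := by
      intro b hb w hw
      have := W.smul_mem (⟨b, hb⟩ : B) ((hmem w).1 hw)
      rwa [coe_smul] at this
    rcases hirr W' hinv with h | h
    · left; ext x
      rw [← hmem x, h]
      simp [Submodule.mem_bot]
    · right; ext x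
      simp only [Submodule.mem_top, iff_true]
      exact (hmem x).1 (by rw [h]; trivial)
  haveI : IsSemisimpleModule B V :=
    (isSemisimpleModule_iff B V).mpr ⟨fun a => by
      rcases eq_bot_or_eq_top a with h | h <;> subst h
      · exact ⟨⊤, isCompl_bot_top⟩
      · exact ⟨⊥, isCompl_top_bot⟩⟩
  haveI : IsSemisimpleModule B (Fin n → V) := by
    apply isSemisimpleModule_of_isSemisimpleModule_submodule'
      (p := fun j => LinearMap.range (LinearMap.single B (fun _ : Fin n => V) j))
    · intro j
      exact IsSemisimpleModule.range _
    · rw [eq_top_iff]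
      intro x _
      have hx : x = ∑ j, Pi.single j (x j) := by
        ext j'
        rw [Finset.sum_apply]
        simp [Pi.single_apply]
      rw [hx]
      apply Submodule.sum_mem
      intro j _
      exact Submodule.mem_iSup_of_mem j ⟨x j, rfl⟩
  set v0 : Fin n → V := fun j => v j with hv0
  set N : Submodule B (Fin n → V) := Submodule.span B {v0} with hN
  obtain ⟨C, hC⟩ := exists_isCompl N
  set pr := N.linearProjOfIsCompl C hC with hpr
  set E : (Fin n → V) →ₗ[B] (Fin n → V) := N.subtype.comp pr with hE
  have hErange : ∀ y, E y ∈ N := fun y => (pr y).2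
  have hEfix : ∀ y, ∀ hy : y ∈ N, E y = y := by
    intro y hy
    have : pr y = ⟨y, hy⟩ := Submodule.linearProjOfIsCompl_apply_left hC ⟨y, hy⟩
    simp [hE, this]
  -- the matrix entries of E commute with B, hence are scalars
  have hsingle : ∀ (b : B) (k : Fin n) (x : V),
      Pi.single k (b • x) = b • (Pi.single k x : Fin n → V) := by
    intro b k x
    ext j'
    rcases eq_or_ne j' k with h | h
    · subst h; simp [Pi.single_apply]
    · simp [Pi.single_apply, h]
  have hscal : ∀ j k : Fin n, ∃ c : ℂ, ∀ x : V, E (Pi.single k x) j = c • x := by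
    intro j k
    set u : Module.End ℂ V :=
      { toFun := fun x => E (Pi.single k x) j
        map_add' := by
          intro x y
          show E (Pi.single k (x + y)) j = E (Pi.single k x) j + E (Pi.single k y) j
          have hadd : (Pi.single k (x + y) : Fin n → V) = Pi.single k x + Pi.single k y := by
            ext j'
            rcases eq_or_ne j' k with h | h
            · subst h; simp
            · simp [Pi.single_apply, h]
          rw [hadd, map_add]
          rfl
        map_smul' := by
          intro c x
          show E (Pi.single k (c • x)) j = c • E (Pi.single k x) j
          have h1 : c • x = (algebraMap ℂ B c) • x := (algsmul c x).symm
          rw [h1, hsingle, map_smul]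
          exact algsmul c _ } with hu
    have hcomm : ∀ b : B, u * (b : Module.End ℂ V) = b * u := by
      intro b
      ext x
      simp only [Module.End.mul_apply]
      have h1 : (b : Module.End ℂ V) x = b • x := rfl
      have h2 : u (b • x) = b • u x := by
        simp only [hu, LinearMap.coe_mk, AddHom.coe_mk]
        rw [hsingle, map_smul]
        rfl
      rw [h1, h2]
      rfl
    obtain ⟨c, hc⟩ := schur u hcomm
    refine ⟨c, fun x => ?_⟩
    have := congrArg (fun (z : Module.End ℂ V) => z x) hc
    simpa [hu] using this
  choose c hc using hscal
  have hEapply : ∀ (y : Fin n → V) (j : Fin n), E y j = ∑ k, c j k • y k := by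
    intro y j
    have hy : y = ∑ k, Pi.single k (y k) := by
      ext j'
      rw [Finset.sum_apply]
      simp [Pi.single_apply]
    conv_lhs => rw [hy]
    rw [map_sum, Finset.sum_apply]
    exact Finset.sum_congr rfl fun k _ => hc j k (y k)
  have hv0N : v0 ∈ N := Submodule.mem_span_singleton_self v0
  have hv0fix : ∀ j, v0 j = ∑ k, c j k • v0 k := by
    intro j
    conv_lhs => rw [← hEfix v0 hv0N]
    exact hEapply v0 j
  set Fv : Fin n → V := fun j => f (v0 j) with hFv
  have hFvN : Fv ∈ N := by
    have : Fv = E Fv := by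
      ext j
      rw [hEapply Fv j, hFv]
      simp only
      rw [show f (v0 j) = f (∑ k, c j k • v0 k) from by rw [← hv0fix j]]
      rw [map_sum]
      exact Finset.sum_congr rfl fun k _ => by rw [map_smul]
    rw [this]
    exact hErange Fv
  rw [hN, Submodule.mem_span_singleton] at hFvN
  obtain ⟨b, hb⟩ := hFvN
  have hfb : f = (b : Module.End ℂ V) := by
    apply v.ext
    intro j
    have := congrFun hb j
    have h1 : (b • v0) j = (b : Module.End ℂ V) (v j) := rfl
    rw [h1] at this
    exact this.symm
  rw [hfb]
  exact b.2

private lemma tprod_eq_zero {d : ℕ} {V : Fin d → Type*} [∀ i, AddCommGroup (V i)]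
    [∀ i, Module ℂ (V i)] (v : Π i, V i) (i₀ : Fin d) (h : v i₀ = 0) :
    PiTensorProduct.tprod ℂ v = 0 := by
  classical
  have hv : v = Function.update v i₀ 0 := by
    funext j
    rcases eq_or_ne j i₀ with rfl | hj
    · rw [Function.update_self, h]
    · rw [Function.update_of_ne hj]
  rw [hv]
  exact (PiTensorProduct.tprod ℂ).map_update_zero v i₀

private lemma exists_tensor_basis {d : ℕ} (V : Fin d → Type*) [∀ i, AddCommGroup (V i)]
    [∀ i, Module ℂ (V i)] [∀ i, FiniteDimensional ℂ (V i)] :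
    ∃ bT : Module.Basis (Π i, Fin (Module.finrank ℂ (V i))) ℂ (⨂[ℂ] i, V i),
      ∀ m, bT m = PiTensorProduct.tprod ℂ (fun i => Module.finBasis ℂ (V i) (m i)) := by
  classical
  set b : Π i, Module.Basis (Fin (Module.finrank ℂ (V i))) ℂ (V i) := fun i => Module.finBasis ℂ (V i)
    with hb
  set B : (Π i, Fin (Module.finrank ℂ (V i))) → ⨂[ℂ] i, V i :=
    fun m => PiTensorProduct.tprod ℂ (fun i => b i (m i)) with hB
  have hlin : LinearIndependent ℂ B := by
    rw [Fintype.linearIndependent_iff]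
    intro gc hgc m₀
    set Λ : (⨂[ℂ] i, V i) →ₗ[ℂ] ℂ :=
      PiTensorProduct.lift ((MultilinearMap.mkPiAlgebra ℂ (Fin d) ℂ).compLinearMap
        (fun i => (b i).coord (m₀ i))) with hΛdef
    have hΛ : ∀ m, Λ (B m) = if m = m₀ then 1 else 0 := by
      intro m
      simp only [hB, hΛdef, PiTensorProduct.lift.tprod, MultilinearMap.compLinearMap_apply,
        MultilinearMap.mkPiAlgebra_apply]
      rcases eq_or_ne m m₀ with rfl | hne
      · rw [if_pos rfl]
        apply Finset.prod_eq_one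
        intro i _
        simp [Module.Basis.coord_apply, Module.Basis.repr_self]
      · rw [if_neg hne]
        obtain ⟨i₀, hi₀⟩ := Function.ne_iff.mp hne
        apply Finset.prod_eq_zero (Finset.mem_univ i₀)
        simp [Module.Basis.coord_apply, Module.Basis.repr_self, Finsupp.single_apply, hi₀]
    have h0 := congrArg Λ hgc
    rw [map_sum, map_zero] at h0
    simp only [map_smul, hΛ] at h0
    have h1 : (∑ m, gc m • if m = m₀ then (1:ℂ) else 0) = gc m₀ := by
      rw [Finset.sum_congr rfl (fun m _ => by rw [smul_ite, smul_eq_mul, mul_one, smul_zero])]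
      rw [Finset.sum_ite_eq' Finset.univ m₀ gc]
      simp
    rw [h1] at h0
    exact h0
  have hspan : ⊤ ≤ Submodule.span ℂ (Set.range B) := by
    rw [← PiTensorProduct.span_tprod_eq_top, Submodule.span_le]
    rintro x ⟨v, rfl⟩
    have hvi : v = fun i => ∑ k, (b i).repr (v i) k • b i k :=
      funext fun i => ((b i).sum_repr (v i)).symm
    have hv : (PiTensorProduct.tprod ℂ) v
        = ∑ m : Π i, Fin (Module.finrank ℂ (V i)), (∏ i, (b i).repr (v i) (m i)) • B m := by
      rw [congrArg (PiTensorProduct.tprod ℂ) hvi, MultilinearMap.map_sum]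
      apply Finset.sum_congr rfl
      intro m _
      rw [MultilinearMap.map_smul_univ]
    rw [hv]
    exact Submodule.sum_mem _ fun m _ =>
      Submodule.smul_mem _ _ (Submodule.subset_span ⟨m, rfl⟩)
  refine ⟨Module.Basis.mk hlin hspan, fun m => ?_⟩
  rw [Module.Basis.mk_apply hlin hspan m]

noncomputable def extEnd {d : ℕ} {V : Fin d → Type*} [∀ i, AddCommGroup (V i)]
    [∀ i, Module ℂ (V i)] (i : Fin d) (T : Module.End ℂ (V i)) :
    Module.End ℂ (⨂[ℂ] j, V j) :=
  PiTensorProduct.map (Function.update (fun j => (LinearMap.id : V j →ₗ[ℂ] V j)) i T)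

lemma extEnd_tprod {d : ℕ} {V : Fin d → Type*} [∀ i, AddCommGroup (V i)]
    [∀ i, Module ℂ (V i)] (i : Fin d) (T : Module.End ℂ (V i)) (v : Π j, V j) :
    extEnd i T (PiTensorProduct.tprod ℂ v) = PiTensorProduct.tprod ℂ (Function.update v i (T (v i))) := by
  classical
  rw [extEnd, PiTensorProduct.map_tprod]
  congr 1
  funext j
  rcases eq_or_ne j i with rfl | hj
  · rw [Function.update_self, Function.update_self]
  · rw [Function.update_of_ne hj, Function.update_of_ne hj, LinearMap.id_apply]

noncomputable def extAlgHom {d : ℕ} {V : Fin d → Type*} [∀ i, AddCommGroup (V i)]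
    [∀ i, Module ℂ (V i)] (i : Fin d) :
    Module.End ℂ (V i) →ₐ[ℂ] Module.End ℂ (⨂[ℂ] j, V j) where
  toFun := extEnd i
  map_one' := by
    classical
    apply PiTensorProduct.ext; apply MultilinearMap.ext; intro v
    simp only [LinearMap.compMultilinearMap_apply]
    rw [extEnd_tprod]
    rw [Module.End.one_apply, Module.End.one_apply, Function.update_eq_self]
  map_mul' := by
    classical
    intro T S
    apply PiTensorProduct.ext; apply MultilinearMap.ext; intro v
    simp only [LinearMap.compMultilinearMap_apply, Module.End.mul_apply]
    rw [extEnd_tprod, extEnd_tprod, extEnd_tprod, Function.update_self, Function.update_idem,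
      Module.End.mul_apply]
  map_zero' := by
    classical
    apply PiTensorProduct.ext; apply MultilinearMap.ext; intro v
    simp only [LinearMap.compMultilinearMap_apply, LinearMap.zero_apply]
    rw [extEnd_tprod, LinearMap.zero_apply]
    exact (PiTensorProduct.tprod ℂ).map_update_zero v i
  map_add' := by
    classical
    intro T S
    apply PiTensorProduct.ext; apply MultilinearMap.ext; intro v
    simp only [LinearMap.compMultilinearMap_apply, LinearMap.add_apply]
    rw [extEnd_tprod, extEnd_tprod, extEnd_tprod]
    exact (PiTensorProduct.tprod ℂ).map_update_add v i (T (v i)) (S (v i))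
  commutes' := by
    classical
    intro c
    apply PiTensorProduct.ext; apply MultilinearMap.ext; intro v
    simp only [LinearMap.compMultilinearMap_apply]
    rw [extEnd_tprod, Module.algebraMap_end_apply, Module.algebraMap_end_apply]
    rw [(PiTensorProduct.tprod ℂ).map_update_smul v i c (v i), Function.update_eq_self]

/-- For `g` finite-dimensional semisimple, `V i` finite-dimensional
irreducible `g`-modules and pairwise distinct points `p i ∈ ℂ`, the evaluation module
`V 0 ⊗ ⋯ ⊗ V (d-1)` is an irreducible module over the current algebra `g[t]`:
the zero submodule is proper, and any `ℂ`-subspace stable under the evaluation action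
of `g[t]` is `⊥` or `⊤`. -/
theorem evaluation_module_irreducible
    (g : Type*) [LieRing g] [LieAlgebra ℂ g] [FiniteDimensional ℂ g]
    [LieAlgebra.IsSemisimple ℂ g]
    {d : ℕ} (V : Fin d → Type*) [∀ i, AddCommGroup (V i)] [∀ i, Module ℂ (V i)]
    [∀ i, LieRingModule g (V i)] [∀ i, LieModule ℂ g (V i)]
    [∀ i, FiniteDimensional ℂ (V i)] [∀ i, LieModule.IsIrreducible ℂ g (V i)]
    (p : Fin d → ℂ) (hp : Function.Injective p)
    (φ : (Polynomial ℂ ⊗[ℂ] g) →ₗ⁅ℂ⁆ Module.End ℂ (⨂[ℂ] i, V i))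
    (hφ : ∀ (P : Polynomial ℂ) (x : g) (v : (i : Fin d) → V i),
      φ (P ⊗ₜ[ℂ] x) (PiTensorProduct.tprod ℂ v) =
        ∑ i, P.eval (p i) • PiTensorProduct.tprod ℂ (Function.update v i ⁅x, v i⁆)) :
    (⊥ : Submodule ℂ (⨂[ℂ] i, V i)) ≠ ⊤ ∧
    ∀ q : Submodule ℂ (⨂[ℂ] i, V i),
      (∀ z : Polynomial ℂ ⊗[ℂ] g, ∀ w ∈ q, φ z w ∈ q) → q = ⊥ ∨ q = ⊤ := by
  classical
  obtain ⟨bT, hbT⟩ := exists_tensor_basis V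
  haveI hnt : ∀ i, Nontrivial (V i) := by
    intro i
    by_contra hcon
    rw [not_nontrivial_iff_subsingleton] at hcon
    have hbt : (⊥ : LieSubmodule ℂ g (V i)) = ⊤ := by
      apply LieSubmodule.ext
      intro m
      have : m = 0 := Subsingleton.elim m 0
      subst this
      simp
    exact bot_ne_top hbt
  have hpos : ∀ i, 0 < Module.finrank ℂ (V i) := fun i => Module.finrank_pos
  have m0 : Π i, Fin (Module.finrank ℂ (V i)) := fun i => ⟨0, hpos i⟩
  constructor
  · intro hbt
    apply bT.ne_zero m0
    have : bT m0 ∈ (⊥ : Submodule ℂ (⨂[ℂ] i, V i)) := by rw [hbt]; trivial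
    simpa using this
  intro q hq
  rcases eq_or_ne q ⊥ with hqb | hqb
  · exact Or.inl hqb
  right
  set A := Algebra.adjoin ℂ (Set.range ⇑φ) with hA
  -- q is stable under the subalgebra generated by the image of φ
  have hstab : ∀ f ∈ A, ∀ w ∈ q, f w ∈ q := by
    intro f hf
    refine Algebra.adjoin_induction ?_ ?_ ?_ ?_ hf
    · rintro x ⟨z, rfl⟩ w hw; exact hq z w hw
    · intro r w hw
      rw [Module.algebraMap_end_apply]
      exact q.smul_mem r hw
    · intro x y _ _ hx' hy' w hw
      rw [LinearMap.add_apply]; exact q.add_mem (hx' w hw) (hy' w hw)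
    · intro x y _ _ hx' hy' w hw
      rw [Module.End.mul_apply]; exact hx' _ (hy' w hw)
  -- interpolation : factorwise Lie algebra action is in A
  have h1 : ∀ (i : Fin d) (x : g), extEnd i (LieModule.toEnd ℂ g (V i) x) ∈ A := by
    intro i x
    have heq : φ ((Lagrange.basis Finset.univ p i) ⊗ₜ[ℂ] x)
        = extEnd i (LieModule.toEnd ℂ g (V i) x) := by
      apply PiTensorProduct.ext; apply MultilinearMap.ext; intro v
      simp only [LinearMap.compMultilinearMap_apply]
      rw [hφ, extEnd_tprod]
      rw [Finset.sum_eq_single i]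
      · rw [Lagrange.eval_basis_self (Set.injOn_of_injective hp) (Finset.mem_univ i), one_smul,
          LieModule.toEnd_apply_apply]
      · intro j _ hj
        rw [Lagrange.eval_basis_of_ne (Ne.symm hj) (Finset.mem_univ j), zero_smul]
      · intro hi
        exact absurd (Finset.mem_univ i) hi
    rw [← heq]
    exact Algebra.subset_adjoin ⟨_, rfl⟩
  -- Burnside : every single-factor endomorphism is in A
  have h2 : ∀ (i : Fin d) (T : Module.End ℂ (V i)), extEnd i T ∈ A := by
    intro i T
    haveI := hnt i
    suffices h : T ∈ A.comap (extAlgHom (V := V) i) by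
      exact (Subalgebra.mem_comap A (extAlgHom (V := V) i) T).1 h
    apply burnside
    intro W hW
    set W' : LieSubmodule ℂ g (V i) :=
      { toSubmodule := W
        lie_mem := by
          intro x m hm
          have hmem : LieModule.toEnd ℂ g (V i) x ∈ A.comap (extAlgHom (V := V) i) :=
            (Subalgebra.mem_comap A (extAlgHom (V := V) i) _).2 (h1 i x)
          have := hW _ hmem m hm
          rwa [LieModule.toEnd_apply_apply] at this } with hW'
    have hmemW : ∀ m : V i, m ∈ W' ↔ m ∈ W := fun m => Iff.rfl
    rcases eq_bot_or_eq_top W' with hc | hc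
    · left
      ext m
      rw [Submodule.mem_bot, ← hmemW m, hc]
      simp [LieSubmodule.mem_bot]
    · right
      ext m
      simp only [Submodule.mem_top, iff_true]
      rw [← hmemW m, hc]
      simp [LieSubmodule.mem_top]
  -- all product operators are in A
  have h3 : ∀ T : Π i, Module.End ℂ (V i), PiTensorProduct.map T ∈ A := by
    intro T
    have key : ∀ s : Finset (Fin d),
        PiTensorProduct.map (fun i => if i ∈ s then T i else LinearMap.id) ∈ A := by
      intro s
      induction s using Finset.induction_on with
      | empty =>
        have he : PiTensorProduct.map
            (fun i : Fin d => if i ∈ (∅ : Finset (Fin d)) then T i else LinearMap.id) = 1 := by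
          apply PiTensorProduct.ext; apply MultilinearMap.ext; intro v
          simp only [LinearMap.compMultilinearMap_apply, PiTensorProduct.map_tprod,
            Finset.notMem_empty, if_false, LinearMap.id_apply, Module.End.one_apply]
        rw [he]; exact A.one_mem
      | @insert a s ha ih =>
        have hstep : PiTensorProduct.map
              (fun i => if i ∈ insert a s then T i else LinearMap.id)
            = extEnd a (T a) * PiTensorProduct.map
              (fun i => if i ∈ s then T i else LinearMap.id) := by
          apply PiTensorProduct.ext; apply MultilinearMap.ext; intro v
          simp only [LinearMap.compMultilinearMap_apply, Module.End.mul_apply,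
            PiTensorProduct.map_tprod]
          rw [extEnd_tprod]
          congr 1
          funext j
          rcases eq_or_ne j a with rfl | hj
          · rw [if_pos (Finset.mem_insert_self j s), Function.update_self, if_neg ha,
              LinearMap.id_apply]
          · rw [Function.update_of_ne hj]
            by_cases hjs : j ∈ s
            · rw [if_pos hjs, if_pos (Finset.mem_insert_of_mem hjs)]
            · rw [if_neg hjs, if_neg (by simp [Finset.mem_insert, hj, hjs])]
        rw [hstep]
        exact A.mul_mem (h2 a (T a)) ih
    have hT : T = fun i => if i ∈ Finset.univ then T i else LinearMap.id := by
      funext i; simp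
    rw [hT]
    exact key Finset.univ
  -- therefore A is everything
  have h4 : ∀ f : Module.End ℂ (⨂[ℂ] i, V i), f ∈ A := by
    intro f
    set Ek : (Π i, Fin (Module.finrank ℂ (V i))) → (Π i, Fin (Module.finrank ℂ (V i))) →
        Module.End ℂ (⨂[ℂ] i, V i) := fun k l =>
      PiTensorProduct.map (fun i => (Module.finBasis ℂ (V i)).constr ℂ
        (fun m => if m = l i then Module.finBasis ℂ (V i) (k i) else 0)) with hEk
    have hEkB : ∀ k l m, Ek k l (bT m) = if m = l then bT k else 0 := by
      intro k l m
      rw [hbT, hEk]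
      simp only [PiTensorProduct.map_tprod]
      have hc : ∀ i, ((Module.finBasis ℂ (V i)).constr ℂ
          (fun m' => if m' = l i then Module.finBasis ℂ (V i) (k i) else 0))
          (Module.finBasis ℂ (V i) (m i))
          = if m i = l i then Module.finBasis ℂ (V i) (k i) else 0 :=
        fun i => Module.Basis.constr_basis _ _ _ _
      rcases eq_or_ne m l with rfl | hne
      · rw [if_pos rfl, hbT]
        congr 1; funext i; rw [hc i, if_pos rfl]
      · rw [if_neg hne]
        obtain ⟨i₀, hi₀⟩ := Function.ne_iff.mp hne
        apply tprod_eq_zero _ i₀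
        show ((Module.finBasis ℂ (V i₀)).constr ℂ
          (fun m' => if m' = l i₀ then Module.finBasis ℂ (V i₀) (k i₀) else 0))
          (Module.finBasis ℂ (V i₀) (m i₀)) = 0
        rw [hc i₀, if_neg hi₀]
    have hrepr : f = ∑ k, ∑ l, (bT.repr (f (bT l)) k) • Ek k l := by
      apply bT.ext
      intro m
      have hrhs : (∑ k, ∑ l, (bT.repr (f (bT l)) k) • Ek k l) (bT m)
          = ∑ k, (bT.repr (f (bT m)) k) • bT k := by
        rw [LinearMap.sum_apply]
        apply Finset.sum_congr rfl
        intro k _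
        rw [LinearMap.sum_apply]
        have hterm : ∀ l, ((bT.repr (f (bT l)) k) • Ek k l) (bT m)
            = if l = m then (bT.repr (f (bT l)) k) • bT k else 0 := by
          intro l
          rw [LinearMap.smul_apply, hEkB]
          rcases eq_or_ne m l with rfl | hne
          · rw [if_pos rfl, if_pos rfl]
          · rw [if_neg hne, if_neg (Ne.symm hne), smul_zero]
        rw [Finset.sum_congr rfl (fun l _ => hterm l), Finset.sum_ite_eq' Finset.univ m]
        rw [if_pos (Finset.mem_univ m)]
      rw [hrhs, bT.sum_repr]
    rw [hrepr]
    apply sum_mem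
    intro k _
    apply sum_mem
    intro l _
    exact A.smul_mem (h3 _) _
  -- conclude q = ⊤
  obtain ⟨w, hwq, hw0⟩ := Submodule.exists_mem_ne_zero_of_ne_bot hqb
  rw [eq_top_iff]
  intro u _
  have hex : ∃ k, bT.repr w k ≠ 0 := by
    by_contra hall
    push_neg at hall
    apply hw0
    have hz : bT.repr w = 0 := Finsupp.ext hall
    have := congrArg bT.repr.symm hz
    simpa using this
  obtain ⟨k0, hk0⟩ := hex
  set F : Module.End ℂ (⨂[ℂ] i, V i) :=
    LinearMap.smulRight ((bT.repr w k0)⁻¹ • bT.coord k0) u with hF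
  have hFw : F w = u := by
    rw [hF, LinearMap.smulRight_apply, LinearMap.smul_apply, Module.Basis.coord_apply,
      smul_eq_mul, inv_mul_cancel₀ hk0, one_smul]
  rw [← hFw]
  exact hstab F (h4 F) w hwq
end

section
/- With notation as in the Schur–Weyl setting (V = C^n, distinct evaluation points p_1,...,p_k, surjection Ξ: [U(gl(n)[t])]^{gl(n)} → C[Σ_k]): for a transposition τ = (r,s) ∈ Σ_k, define P_τ = (t−p_r+1)·∏_{d≠r} (t−p_d)/(p_r−p_d) and Q_τ = (t−p_s+1)·∏_{d≠s} (t−p_d)/(p_s−p_d). Then Ξ(Σ_{1≤i,j≤n} E_{i,j}(P_τ)·E_{j,i}(Q_τ)) = τ. -/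
open scoped TensorProduct
open Polynomial
attribute [local instance 100] LieRing.ofAssociativeRing

/-- In the Schur–Weyl setting (`V = ℂⁿ`, evaluation points
`p 0, …, p (k-1)` distinct, evaluation action `φ` of `gl(n)[t]` on `V^{⊗k}`), for a
transposition `τ = (r, s)` define
`P_τ = (t - p r + 1) ∏_{d ≠ r} (t - p d)/(p r - p d)` and
`Q_τ = (t - p s + 1) ∏_{d ≠ s} (t - p d)/(p s - p d)`.
Then `Ξ(∑_{i,j} E_{i,j}(P_τ) · E_{j,i}(Q_τ)) = τ`, i.e. the corresponding element of
`U(gl(n)[t])` acts on `V^{⊗k}` as the flip of the `r`-th and `s`-th tensor factors. -/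
theorem schur_weyl_transposition_preimage
    (n k : ℕ) (p : Fin k → ℂ) (hp : Function.Injective p)
    (φ : (Polynomial ℂ ⊗[ℂ] Matrix (Fin n) (Fin n) ℂ) →ₗ⁅ℂ⁆
      Module.End ℂ (⨂[ℂ]^k (Fin n → ℂ)))
    (hφ : ∀ (P : Polynomial ℂ) (x : Matrix (Fin n) (Fin n) ℂ) (v : Fin k → Fin n → ℂ),
      φ (P ⊗ₜ[ℂ] x) (PiTensorProduct.tprod ℂ v) =
        ∑ i, P.eval (p i) •
          PiTensorProduct.tprod ℂ (Function.update v i (Matrix.mulVecLin x (v i))))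
    (r s : Fin k) (hrs : r ≠ s)
    (Pτ Qτ : Polynomial ℂ)
    (hP : Pτ = (X - C (p r) + 1) *
      ∏ d ∈ Finset.univ.erase r, (C ((p r - p d)⁻¹) * (X - C (p d))))
    (hQ : Qτ = (X - C (p s) + 1) *
      ∏ d ∈ Finset.univ.erase s, (C ((p s - p d)⁻¹) * (X - C (p d))))
    (v : Fin k → Fin n → ℂ) :
    UniversalEnvelopingAlgebra.lift ℂ φ
      (∑ i : Fin n, ∑ j : Fin n,
        UniversalEnvelopingAlgebra.ι ℂ (Pτ ⊗ₜ[ℂ] Matrix.single i j (1 : ℂ)) *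
        UniversalEnvelopingAlgebra.ι ℂ (Qτ ⊗ₜ[ℂ] Matrix.single j i (1 : ℂ)))
      (PiTensorProduct.tprod ℂ v)
    = PiTensorProduct.tprod ℂ (fun j => v (Equiv.swap r s j)) := by
  classical
  -- evaluation of the interpolation polynomials
  have hpe : ∀ (u : Fin k) (Pu : Polynomial ℂ),
      Pu = (X - C (p u) + 1) *
        ∏ d ∈ Finset.univ.erase u, (C ((p u - p d)⁻¹) * (X - C (p d))) →
      ∀ a, Pu.eval (p a) = if a = u then 1 else 0 := by
    intro u Pu hPu a
    subst hPu
    by_cases h : a = u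
    · subst h
      have h1 : ∀ d ∈ Finset.univ.erase a,
          Polynomial.eval (p a) (C ((p a - p d)⁻¹) * (X - C (p d))) = 1 := by
        intro d hd
        have hd' : p a - p d ≠ 0 :=
          sub_ne_zero.mpr (fun hh => (Finset.mem_erase.mp hd).1 (hp hh).symm)
        simp [inv_mul_cancel₀ hd']
      rw [if_pos rfl, eval_mul, eval_prod, Finset.prod_congr rfl h1, Finset.prod_const_one]
      simp
    · rw [if_neg h, eval_mul, eval_prod,
        Finset.prod_eq_zero (Finset.mem_erase.mpr ⟨h, Finset.mem_univ a⟩) (by simp), mul_zero]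
  set e : Fin n → (Fin n → ℂ) := fun i => Pi.single i 1 with he
  have hmv : ∀ (i j : Fin n) (w : Fin n → ℂ),
      Matrix.mulVecLin (Matrix.single i j (1 : ℂ)) w = w j • e i := by
    intro i j w
    funext a
    simp [Matrix.mulVecLin_apply, Matrix.single_mulVec, Function.update_apply,
      Pi.single_apply, he, mul_comm]
  -- the action of a delta-interpolating polynomial
  have hact : ∀ (u : Fin k) (Pu : Polynomial ℂ),
      (∀ a, Pu.eval (p a) = if a = u then 1 else 0) →
      ∀ (x : Matrix (Fin n) (Fin n) ℂ) (w : Fin k → Fin n → ℂ),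
      φ (Pu ⊗ₜ[ℂ] x) (PiTensorProduct.tprod ℂ w)
        = PiTensorProduct.tprod ℂ (Function.update w u (x.mulVecLin (w u))) := by
    intro u Pu hPu x w
    rw [hφ]
    simp [hPu, ite_smul]
  -- expansion of one slot in the basis
  have hexp : ∀ (m : Fin k → Fin n → ℂ) (u : Fin k) (w : Fin n → ℂ),
      PiTensorProduct.tprod ℂ (Function.update m u w)
        = ∑ i, w i • PiTensorProduct.tprod ℂ (Function.update m u (e i)) := by
    intro m u w
    have hw : w = ∑ i, w i • e i := by
      funext a
      rw [Finset.sum_apply]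
      simp [he, Pi.single_apply]
    calc PiTensorProduct.tprod ℂ (Function.update m u w)
        = ((PiTensorProduct.tprod ℂ).toLinearMap m u) w := rfl
      _ = ((PiTensorProduct.tprod ℂ).toLinearMap m u) (∑ i, w i • e i) := by rw [← hw]
      _ = ∑ i, w i • ((PiTensorProduct.tprod ℂ).toLinearMap m u) (e i) := by
          rw [map_sum]; simp
      _ = ∑ i, w i • PiTensorProduct.tprod ℂ (Function.update m u (e i)) := rfl
  have step : ∀ i j : Fin n,
      φ (Pτ ⊗ₜ[ℂ] Matrix.single i j (1 : ℂ))
        (φ (Qτ ⊗ₜ[ℂ] Matrix.single j i (1 : ℂ)) (PiTensorProduct.tprod ℂ v))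
      = (v r j) • (v s i) •
          PiTensorProduct.tprod ℂ
            (Function.update (Function.update v r (e i)) s (e j)) := by
    intro i j
    rw [hact s Qτ (hpe s Qτ hQ), hact r Pτ (hpe r Pτ hP),
      Function.update_of_ne hrs, hmv, hmv,
      MultilinearMap.map_update_smul, Function.update_comm hrs.symm,
      MultilinearMap.map_update_smul]
  -- compute the left hand side
  rw [map_sum]
  simp only [map_sum, map_mul, LinearMap.sum_apply, Module.End.mul_apply,
    UniversalEnvelopingAlgebra.lift_ι_apply]
  simp only [step]
  -- compute the right hand side
  have hswap : (fun a => v (Equiv.swap r s a))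
      = Function.update (Function.update v r (v s)) s (v r) := by
    funext a
    rcases eq_or_ne a r with rfl | har
    · rw [Equiv.swap_apply_left, Function.update_of_ne hrs, Function.update_self]
    rcases eq_or_ne a s with rfl | has
    · rw [Equiv.swap_apply_right, Function.update_self]
    · rw [Equiv.swap_apply_of_ne_of_ne har has, Function.update_of_ne has,
        Function.update_of_ne har]
  rw [hswap, hexp]
  have inner : ∀ j : Fin n,
      PiTensorProduct.tprod ℂ (Function.update (Function.update v r (v s)) s (e j))
      = ∑ i, (v s i) • PiTensorProduct.tprod ℂ
          (Function.update (Function.update v r (e i)) s (e j)) := by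
    intro j
    rw [Function.update_comm hrs, hexp]
    refine Finset.sum_congr rfl fun i _ => ?_
    rw [Function.update_comm hrs]
  simp only [inner, Finset.smul_sum]
  rw [Finset.sum_comm]
end
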